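/- Let X be a topological space and m ≥ 1. If the l1-homology groups satisfy H^{l1}_m(X) = H^{l1}_{m+1}(X) = 0, then the bounded cohomology group Ĥ^{m+1}(X) = 0. -/

import Mathlib

open scoped ENNReal

noncomputable section

namespace L1Homology

/-- The standard topological `m`-simplex. -/
abbrev StdSpx (m : ℕ) := ↥(stdSimplex ℝ (Fin (m + 1)))

/-- The affine inclusion `Δ^m → Δ^{m+1}` of the face opposite to the `i`-th vertex. -/
def faceMap {m : ℕ} (i : Fin (m + 2)) : C(StdSpx m, StdSpx (m + 1)) where
  toFun x := ⟨fun j => ∑ k ∈ Finset.univ.filter (fun k => i.succAbove k = j), x.1 k,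
    ⟨fun j => Finset.sum_nonneg fun k _ => x.2.1 k, by
      rw [Finset.sum_fiberwise_of_maps_to (fun k _ => Finset.mem_univ (i.succAbove k)) x.1]
      exact x.2.2⟩⟩
  continuous_toFun := Continuous.subtype_mk
    (continuous_pi fun j => continuous_finset_sum _ fun k _ =>
      (continuous_apply k).comp continuous_subtype_val) _

variable (X : Type*) [TopologicalSpace X]

/-- Singular `m`-simplices of `X`. -/
abbrev SingSimplex (m : ℕ) := C(StdSpx m, X)

variable {X}

/-- The `i`-th face of a singular `(m+1)`-simplex. -/
def face {m : ℕ} (i : Fin (m + 2)) (s : SingSimplex X (m + 1)) : SingSimplex X m :=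
  s.comp (faceMap i)

/-- `L_m(X)`: the space of `ℓ¹`-chains of degree `m`, i.e. the completion of the space of
real singular `m`-chains in the `ℓ¹`-norm, realised as the Banach space of summable
real-valued functions on the set of singular `m`-simplices. -/
abbrev L1C (X : Type*) [TopologicalSpace X] (m : ℕ) :=
  lp (fun _ : SingSimplex X m => ℝ) 1

/-- Push-forward of an `ℓ¹`-function along a map of index sets (summing over fibers). -/
def pushCore {S T : Type*} (g : S → T) (f : lp (fun _ : S => ℝ) 1) (t : T) : ℝ :=
  ∑' s : {s : S // g s = t}, f s.1

theorem summable_norm_coe {S : Type*} (f : lp (fun _ : S => ℝ) 1) :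
    Summable fun s : S => ‖f s‖ := by
  simpa [ENNReal.toReal_one] using (lp.memℓp f).summable (by simp)

theorem summable_sigma_norm_coe {S T : Type*} (g : S → T) (f : lp (fun _ : S => ℝ) 1) :
    Summable fun x : Σ t : T, {s : S // g s = t} => ‖f x.2.1‖ :=
  (Equiv.sigmaFiberEquiv g).summable_iff.mpr (summable_norm_coe f)

theorem summable_norm_pushCore {S T : Type*} (g : S → T) (f : lp (fun _ : S => ℝ) 1) :
    Summable fun t => ‖pushCore g f t‖ := by
  refine Summable.of_nonneg_of_le (fun t => norm_nonneg _)
    (fun t => norm_tsum_le_tsum_norm ((summable_sigma_norm_coe g f).sigma_factor t))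
    (summable_sigma_norm_coe g f).sigma

theorem memℓp_pushCore {S T : Type*} (g : S → T) (f : lp (fun _ : S => ℝ) 1) :
    Memℓp (pushCore g f) (1 : ℝ≥0∞) :=
  memℓp_gen (by simpa [ENNReal.toReal_one] using summable_norm_pushCore g f)

/-- Push-forward `ℓ¹(S) → ℓ¹(T)` along `g : S → T`. -/
def push {S T : Type*} (g : S → T) (f : lp (fun _ : S => ℝ) 1) : lp (fun _ : T => ℝ) 1 :=
  ⟨pushCore g f, memℓp_pushCore g f⟩

/-- The boundary operator `∂ : L_{m+1}(X) → L_m(X)`, the continuous extension of the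
singular boundary: `∂ = ∑ i, (-1)^i (face i)_*`. -/
def bd (m : ℕ) : L1C X (m + 1) → L1C X m := fun f =>
  ∑ i : Fin (m + 2), ((-1 : ℝ) ^ (i : ℕ)) • push (face i) f


section Push

variable {S T U : Type*}

theorem summable_fiber (g : S → T) (f : lp (fun _ : S => ℝ) 1) (t : T) :
    Summable fun s : {s : S // g s = t} => f s.1 :=
  Summable.of_norm ((summable_sigma_norm_coe g f).sigma_factor t)

theorem push_apply (g : S → T) (f : lp (fun _ : S => ℝ) 1) (t : T) :
    push g f t = pushCore g f t := rfl

theorem push_add (g : S → T) (f f' : lp (fun _ : S => ℝ) 1) :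
    push g (f + f') = push g f + push g f' := by
  apply lp.ext
  funext t
  have : push g (f + f') t = push g f t + push g f' t := by
    rw [push_apply, push_apply, push_apply]
    unfold pushCore
    rw [← Summable.tsum_add (summable_fiber g f t) (summable_fiber g f' t)]
    exact tsum_congr fun s => by simp
  simpa using this

theorem push_smul (g : S → T) (a : ℝ) (f : lp (fun _ : S => ℝ) 1) :
    push g (a • f) = a • push g f := by
  apply lp.ext
  funext t
  have : push g (a • f) t = a * push g f t := by
    rw [push_apply, push_apply]
    unfold pushCore
    rw [← tsum_mul_left]
    exact tsum_congr fun s => by simp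
  simpa using this

end Push

section Push2

variable {S T U : Type*}

theorem lp_norm_eq (f : lp (fun _ : S => ℝ) 1) : ‖f‖ = ∑' s, ‖f s‖ := by
  rw [lp.norm_eq_tsum_rpow (by norm_num) f]
  simp [Real.rpow_one]

theorem norm_push_le (g : S → T) (f : lp (fun _ : S => ℝ) 1) : ‖push g f‖ ≤ ‖f‖ := by
  rw [lp_norm_eq, lp_norm_eq]
  have h1 : ∀ t, ‖push g f t‖ ≤ ∑' s : {s : S // g s = t}, ‖f s.1‖ := fun t =>
    norm_tsum_le_tsum_norm ((summable_sigma_norm_coe g f).sigma_factor t)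
  calc ∑' t, ‖push g f t‖ ≤ ∑' t, ∑' s : {s : S // g s = t}, ‖f s.1‖ :=
        Summable.tsum_le_tsum h1 (summable_norm_pushCore g f) (summable_sigma_norm_coe g f).sigma
    _ = ∑' x : Σ t : T, {s : S // g s = t}, ‖f x.2.1‖ :=
        (Summable.tsum_sigma (summable_sigma_norm_coe g f)).symm
    _ = ∑' s, ‖f s‖ := by exact (Equiv.sigmaFiberEquiv g).tsum_eq fun s => ‖f s‖

/-- `push` as a continuous linear map. -/
def pushCLM (g : S → T) : lp (fun _ : S => ℝ) 1 →L[ℝ] lp (fun _ : T => ℝ) 1 :=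
  LinearMap.mkContinuous
    { toFun := push g
      map_add' := push_add g
      map_smul' := push_smul g } 1
    (fun f => by simpa using norm_push_le g f)

theorem pushCLM_apply (g : S → T) (f : lp (fun _ : S => ℝ) 1) :
    pushCLM g f = push g f := rfl

/-- The fiber of `g ∘ h` over `u` decomposes as a disjoint union of fibers of `h`. -/
def fiberSigmaEquiv (g : T → U) (h : S → T) (u : U) :
    (Σ s : {s : T // g s = u}, {x : S // h x = s.1}) ≃ {x : S // g (h x) = u} where
  toFun p := ⟨p.2.1, by rw [p.2.2, p.1.2]⟩
  invFun x := ⟨⟨h x.1, x.2⟩, ⟨x.1, rfl⟩⟩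
  left_inv := by rintro ⟨⟨s, hs⟩, ⟨x, hx⟩⟩; cases hx; rfl
  right_inv := by rintro ⟨x, hx⟩; rfl

theorem push_push (g : T → U) (h : S → T) (f : lp (fun _ : S => ℝ) 1) :
    push g (push h f) = push (fun s => g (h s)) f := by
  apply lp.ext
  funext u
  have hsum : Summable fun p : Σ s : {s : T // g s = u}, {x : S // h x = s.1} => f p.2.1 :=
    (fiberSigmaEquiv g h u).summable_iff.mpr (summable_fiber (fun s => g (h s)) f u)
  show pushCore g (push h f) u = pushCore (fun s => g (h s)) f u
  unfold pushCore
  calc ∑' s : {s : T // g s = u}, (push h f) s.1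
      = ∑' s : {s : T // g s = u}, ∑' x : {x : S // h x = s.1}, f x.1 := rfl
    _ = ∑' p : Σ s : {s : T // g s = u}, {x : S // h x = s.1}, f p.2.1 := (Summable.tsum_sigma hsum).symm
    _ = ∑' x : {x : S // g (h x) = u}, f x.1 := by
        exact (fiberSigmaEquiv g h u).tsum_eq fun x => f x.1

theorem pushCLM_comp (g : T → U) (h : S → T) :
    (pushCLM g).comp (pushCLM h) = pushCLM (fun s => g (h s)) := by
  ext f
  exact congrFun (congrArg _ (push_push g h f)) _

end Push2

section Simplicial

theorem succAbove_succAbove {m : ℕ} {i j : Fin (m + 2)} (h : i ≤ j) (k : Fin (m + 1)) :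
    (j.succ).succAbove (i.succAbove k) = (i.castSucc).succAbove (j.succAbove k) := by
  rcases i with ⟨i, hi⟩
  rcases j with ⟨j, hj⟩
  rcases k with ⟨k, hk⟩
  simp only [Fin.le_def] at h
  dsimp [Fin.succAbove]
  split_ifs <;> · simp_all [Fin.ext_iff, Fin.lt_def] <;> omega

theorem faceMap_comp_apply {m : ℕ} (J : Fin (m + 3)) (i : Fin (m + 2)) (x : StdSpx m)
    (l : Fin (m + 3)) :
    (faceMap J (faceMap i x)).1 l
      = ∑ k ∈ Finset.univ.filter (fun k => J.succAbove (i.succAbove k) = l), x.1 k := by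
  show ∑ k ∈ Finset.univ.filter (fun k => J.succAbove k = l),
      (∑ u ∈ Finset.univ.filter (fun u => i.succAbove u = k), x.1 u) = _
  rw [← Finset.sum_fiberwise_of_maps_to (t := Finset.univ.filter fun k => J.succAbove k = l)
      (g := fun u => i.succAbove u)
      (fun u hu => by
        simp only [Finset.mem_filter, Finset.mem_univ, true_and] at hu ⊢
        exact hu) x.1]
  refine Finset.sum_congr rfl fun y hy => ?_
  refine Finset.sum_congr ?_ fun _ _ => rfl
  simp only [Finset.mem_filter, Finset.mem_univ, true_and] at hy
  rw [Finset.filter_filter]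
  refine Finset.filter_congr fun u _ => ?_
  exact ⟨fun h2 => ⟨by rw [h2, hy], h2⟩, fun h2 => h2.2⟩

theorem faceMap_faceMap {m : ℕ} {i j : Fin (m + 2)} (h : i ≤ j) :
    (faceMap (j.succ)).comp (faceMap i) = (faceMap (i.castSucc)).comp (faceMap j) := by
  ext x : 1
  apply Subtype.ext
  funext l
  show (faceMap j.succ (faceMap i x)).1 l = (faceMap i.castSucc (faceMap j x)).1 l
  rw [faceMap_comp_apply, faceMap_comp_apply]
  congr 1
  ext k
  simp [succAbove_succAbove h]

theorem face_face {m : ℕ} {i j : Fin (m + 2)} (h : i ≤ j) (s : SingSimplex X (m + 2)) :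
    face i (face j.succ s) = face j (face i.castSucc s) := by
  unfold face
  rw [ContinuousMap.comp_assoc, ContinuousMap.comp_assoc, faceMap_faceMap h]

end Simplicial

section Chain

/-- The boundary operator as a continuous linear map. -/
def bdCLM (m : ℕ) : L1C X (m + 1) →L[ℝ] L1C X m :=
  ∑ i : Fin (m + 2), ((-1 : ℝ) ^ (i : ℕ)) • pushCLM (face i)

theorem bdCLM_apply (m : ℕ) (f : L1C X (m + 1)) : bdCLM m f = bd m f := by
  simp only [bdCLM, bd, ContinuousLinearMap.coe_sum', Finset.sum_apply,
    ContinuousLinearMap.coe_smul', Pi.smul_apply, pushCLM_apply]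

theorem face_comp_cancel {m : ℕ} {i j : Fin (m + 2)} (h : i ≤ j) :
    ((-1 : ℝ) ^ (((j.succ : Fin (m + 3)) : ℕ) + (i : ℕ))) •
        pushCLM (fun s : SingSimplex X (m + 2) => face i (face j.succ s))
      + ((-1 : ℝ) ^ (((i.castSucc : Fin (m + 3)) : ℕ) + (j : ℕ))) •
        pushCLM (fun s : SingSimplex X (m + 2) => face j (face i.castSucc s)) = 0 := by
  have hfun : (fun s : SingSimplex X (m + 2) => face i (face j.succ s))
      = fun s => face j (face i.castSucc s) := funext fun s => face_face h s
  rw [hfun, ← add_smul]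
  have hc : ((-1 : ℝ) ^ (((j.succ : Fin (m + 3)) : ℕ) + (i : ℕ))
      + (-1 : ℝ) ^ (((i.castSucc : Fin (m + 3)) : ℕ) + (j : ℕ))) = 0 := by
    rw [Fin.val_succ, Fin.coe_castSucc]
    have e1 : ((j : ℕ) + 1) + (i : ℕ) = ((i : ℕ) + (j : ℕ)) + 1 := by omega
    have e2 : (i : ℕ) + (j : ℕ) = (i : ℕ) + (j : ℕ) := rfl
    rw [e1, e2, pow_succ]
    ring
  rw [hc, zero_smul]

set_option maxHeartbeats 1000000 in
theorem bd_bd (m : ℕ) (f : L1C X (m + 2)) : bd m (bd (m + 1) f) = 0 := by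
  have key : (bdCLM m).comp (bdCLM (m + 1)) = (0 : L1C X (m + 2) →L[ℝ] L1C X m) := by
    unfold bdCLM
    simp only [ContinuousLinearMap.finset_sum_comp, ContinuousLinearMap.comp_finset_sum,
      ContinuousLinearMap.smul_comp, ContinuousLinearMap.comp_smul, smul_smul,
      pushCLM_comp, Finset.smul_sum, smul_smul, ← pow_add]
    rw [Finset.sum_comm]
    rw [← Finset.sum_product']
    refine Finset.sum_ninvolution
      (fun p : Fin (m + 2) × Fin (m + 3) =>
        if h : (p.2 : ℕ) ≤ (p.1 : ℕ)
        then (⟨(p.2 : ℕ), by omega⟩, p.1.succ)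
        else (⟨(p.2 : ℕ) - 1, by omega⟩, p.1.castSucc))
      ?_ ?_ (fun _ => Finset.mem_univ _) ?_
    · rintro ⟨i, J⟩
      dsimp only
      split_ifs with h
      · have hi : (J : ℕ) ≤ (i : ℕ) := h
        set i' : Fin (m + 2) := ⟨(J : ℕ), by omega⟩ with hi'
        have hJ : J = i'.castSucc := by
          apply Fin.ext
          simp [hi']
        have hle : i' ≤ i := by
          rw [Fin.le_def]
          simpa [hi'] using hi
        dsimp only
        rw [hJ]
        exact (add_comm _ _).trans (face_comp_cancel (i := i') (j := i) hle)
      · push_neg at h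
        have hJ1 : 1 ≤ (J : ℕ) := by omega
        set j : Fin (m + 2) := ⟨(J : ℕ) - 1, by omega⟩ with hj
        have hJ : J = j.succ := by
          apply Fin.ext
          simp [hj]
          omega
        have hle : i ≤ j := by
          rw [Fin.le_def]
          simp [hj]
          omega
        dsimp only
        rw [hJ]
        exact face_comp_cancel (i := i) (j := j) hle
    · rintro ⟨i, J⟩ -
      dsimp only
      split_ifs with h
      · intro hc
        have := congrArg (fun p => (p.2 : ℕ)) hc
        simp at this
        omega
      · intro hc
        have := congrArg (fun p => (p.2 : ℕ)) hc
        simp at this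
        omega
    · rintro ⟨i, J⟩
      dsimp only
      split_ifs with h h2 h3
      · exfalso
        simp [Fin.val_succ] at h2
        omega
      · refine Prod.ext (Fin.ext ?_) (Fin.ext ?_) <;> simp [Fin.val_succ]
      · refine Prod.ext (Fin.ext ?_) (Fin.ext ?_) <;> simp <;> omega
      · exfalso
        push_neg at h
        simp [Fin.coe_castSucc] at h3
        omega
  have h1 : bd m (bd (m + 1) f) = ((bdCLM m).comp (bdCLM (m + 1))) f := by
    rw [ContinuousLinearMap.comp_apply, bdCLM_apply, bdCLM_apply]
  rw [h1, key, ContinuousLinearMap.zero_apply]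

end Chain

set_option maxHeartbeats 2000000
set_option synthInstance.maxHeartbeats 1000000

/-- **Theorem (Matsumoto–Morita).**  Let `X` be a topological space and `m ≥ 1` (below
`m = k + 1`).  If the `ℓ¹`-homology groups vanish, `H^{ℓ¹}_m(X) = H^{ℓ¹}_{m+1}(X) = 0`
(every cycle of `L_•(X)` in these degrees is a boundary), then the bounded cohomology
group `Ĥ^{m+1}(X)` vanishes: every cocycle in the Banach dual `B^{m+1}(X)` of
`L_{m+1}(X)` (with coboundary the adjoint of the boundary) is a coboundary. -/
theorem boundedCohomology_vanishes_of_l1Homology_vanishes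
    (X : Type*) [TopologicalSpace X] (k : ℕ)
    -- `H^{ℓ¹}_{k+1}(X) = 0`
    (h₁ : ∀ c : L1C X (k + 1), bd k c = 0 → ∃ e : L1C X (k + 2), bd (k + 1) e = c)
    -- `H^{ℓ¹}_{k+2}(X) = 0`
    (h₂ : ∀ c : L1C X (k + 2), bd (k + 1) c = 0 → ∃ e : L1C X (k + 3), bd (k + 2) e = c) :
    -- `Ĥ^{k+2}(X) = 0`
    ∀ φ : StrongDual ℝ (L1C X (k + 2)),
      (∀ c : L1C X (k + 3), φ (bd (k + 2) c) = 0) →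
      ∃ ψ : StrongDual ℝ (L1C X (k + 1)), ∀ c : L1C X (k + 2), φ c = ψ (bd (k + 1) c) := by
  intro φ hφ
  classical
  -- φ takes equal values on chains with the same boundary
  have hwd : ∀ c c' : L1C X (k + 2), bd (k + 1) c = bd (k + 1) c' → φ c = φ c' := by
    intro c c' h
    have hz : bd (k + 1) (c - c') = 0 := by
      rw [← bdCLM_apply, map_sub, bdCLM_apply, bdCLM_apply, h, sub_self]
    obtain ⟨e, he⟩ := h₂ (c - c') hz
    have h0 : φ (c - c') = 0 := by rw [← he]; exact hφ e
    rw [map_sub] at h0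
    linarith
  -- the kernel of ∂ₖ, a closed subspace of L_{k+1}
  set K : Submodule ℝ (L1C X (k + 1)) := LinearMap.ker ((bdCLM k : L1C X (k + 1) →L[ℝ] L1C X k) : L1C X (k + 1) →ₗ[ℝ] L1C X k)
    with hK
  have hKc : IsClosed (K : Set (L1C X (k + 1))) := ContinuousLinearMap.isClosed_ker _
  haveI : CompleteSpace K := hKc.completeSpace_coe
  -- ∂_{k+1} corestricted to K
  have hTK : ∀ c : L1C X (k + 2), bdCLM (k + 1) c ∈ K := by
    intro c
    have : bdCLM k (bdCLM (k + 1) c) = 0 := by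
      rw [bdCLM_apply, bdCLM_apply]
      exact bd_bd k c
    simpa [hK, LinearMap.mem_ker] using this
  set T : L1C X (k + 2) →L[ℝ] K := (bdCLM (k + 1)).codRestrict K hTK with hT
  have hTsurj : Function.Surjective T := by
    rintro ⟨y, hy⟩
    have hy' : bd k y = 0 := by
      have := hy
      rw [hK, LinearMap.mem_ker] at this
      rw [← bdCLM_apply]
      exact this
    obtain ⟨e, he⟩ := h₁ y hy'
    refine ⟨e, Subtype.ext ?_⟩
    show bdCLM (k + 1) e = y
    rw [bdCLM_apply]
    exact he
  obtain ⟨C, hC0, hC⟩ := T.exists_preimage_norm_le hTsurj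
  -- a bounded right inverse of T
  choose sec hsec hsecn using hC
  have hbd_sec : ∀ y : K, bd (k + 1) (sec y) = y.1 := fun y => by
    have := congrArg Subtype.val (hsec y)
    rw [← bdCLM_apply]
    exact this
  -- the functional on K induced by φ
  have hwd' : ∀ (y : K) (c : L1C X (k + 2)), bd (k + 1) c = y.1 → φ (sec y) = φ c := by
    intro y c hc
    exact hwd _ _ (by rw [hbd_sec y, hc])
  set ψ₀ : K →ₗ[ℝ] ℝ :=
    { toFun := fun y => φ (sec y)
      map_add' := by
        intro y z
        rw [← map_add φ]
        exact hwd' (y + z) (sec y + sec z)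
          (by rw [← bdCLM_apply, map_add, bdCLM_apply, bdCLM_apply, hbd_sec, hbd_sec]; rfl)
      map_smul' := by
        intro a y
        simp only [RingHom.id_apply]
        rw [← map_smul φ]
        exact hwd' (a • y) (a • sec y)
          (by rw [← bdCLM_apply, map_smul, bdCLM_apply, hbd_sec]; rfl) } with hψ₀
  have hψ₀bd : ∀ y : K, ‖ψ₀ y‖ ≤ (‖φ‖ * C) * ‖y‖ := by
    intro y
    calc ‖φ (sec y)‖ ≤ ‖φ‖ * ‖sec y‖ := φ.le_opNorm _
      _ ≤ ‖φ‖ * (C * ‖y‖) := by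
          have := hsecn y
          gcongr
      _ = (‖φ‖ * C) * ‖y‖ := by ring
  set ψ₁ : K →L[ℝ] ℝ := ψ₀.mkContinuous (‖φ‖ * C) hψ₀bd with hψ₁
  obtain ⟨g, hg, -⟩ := exists_extension_norm_eq K ψ₁
  refine ⟨g, fun c => ?_⟩
  have hmem : bd (k + 1) c ∈ K := by
    rw [← bdCLM_apply]
    exact hTK c
  have : g (bd (k + 1) c) = ψ₁ ⟨bd (k + 1) c, hmem⟩ := hg ⟨bd (k + 1) c, hmem⟩
  rw [this]
  show φ c = φ (sec ⟨bd (k + 1) c, hmem⟩)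
  exact (hwd' _ c rfl).symm

end L1Homology

end
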